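/- Let f : ℝ → ℝ be convex with inf_x f'_-(x) < sup_x f'_+(x), and let λ ∈ ℝ. The set Ω(λ) of minimizers of x ↦ f(x) − λx is nonempty if and only if either (1) there exists x̄ ∈ ℝ with f'_-(x̄) = inf_x f'_-(x) = λ or f'_+(x̄) = sup_x f'_+(x) = λ, or (2) inf_x f'_-(x) < λ < sup_x f'_+(x). -/
import Mathlib


open Filter Topology Set

theorem stmt_6 (f : ℝ → ℝ) (hf : ConvexOn ℝ Set.univ f) (fl fr : ℝ → ℝ)
    (hfl : ∀ x : ℝ,
      Filter.Tendsto (fun z => (f z - f x) / (z - x)) (𝓝[<] x) (𝓝 (fl x)))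
    (hfr : ∀ x : ℝ,
      Filter.Tendsto (fun z => (f z - f x) / (z - x)) (𝓝[>] x) (𝓝 (fr x)))
    (hifs : ∃ x y : ℝ, fl x < fr y) (lam : ℝ) :
    ({x : ℝ | ∀ z : ℝ, f x - lam * x ≤ f z - lam * z}.Nonempty) ↔
      ((∃ xb : ℝ, (fl xb = lam ∧ ∀ x : ℝ, fl xb ≤ fl x) ∨
                  (fr xb = lam ∧ ∀ x : ℝ, fr x ≤ fr xb)) ∨
       ((∃ x : ℝ, fl x < lam) ∧ (∃ x : ℝ, lam < fr x))) := by
  -- monotonicity of secant slopes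
  have hq : ∀ x z w : ℝ, z ≠ x → w ≠ x → z ≤ w →
      (f z - f x) / (z - x) ≤ (f w - f x) / (w - x) := fun x z w hz hw hzw =>
    hf.secant_mono (mem_univ x) (mem_univ z) (mem_univ w) hz hw hzw
  -- slopes from the left are below fl
  have slope_le_fl : ∀ x z : ℝ, z < x → (f z - f x) / (z - x) ≤ fl x := by
    intro x z hz
    refine ge_of_tendsto (hfl x) ?_
    filter_upwards [Ioo_mem_nhdsLT_of_mem (show x ∈ Ioc z x from ⟨hz, le_refl x⟩)] with w hw
    exact hq x z w hz.ne hw.2.ne hw.1.le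
  -- slopes to the right are above fr
  have fr_le_slope : ∀ x z : ℝ, x < z → fr x ≤ (f z - f x) / (z - x) := by
    intro x z hz
    refine le_of_tendsto (hfr x) ?_
    filter_upwards [Ioo_mem_nhdsGT_of_mem (show x ∈ Ico x z from ⟨le_refl x, hz⟩)] with w hw
    exact hq x w z hw.1.ne' hz.ne' hw.2.le
  have fl_le_fr : ∀ x : ℝ, fl x ≤ fr x := by
    intro x
    refine ge_of_tendsto (hfr x) ?_
    filter_upwards [self_mem_nhdsWithin] with w hw
    refine le_of_tendsto (hfl x) ?_
    filter_upwards [self_mem_nhdsWithin] with w' hw'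
    exact hq x w' w (ne_of_lt hw') (ne_of_gt hw) (le_of_lt (lt_trans hw' hw))
  -- characterization of minimizers
  have min_iff : ∀ x : ℝ, (∀ z : ℝ, f x - lam * x ≤ f z - lam * z) ↔
      (fl x ≤ lam ∧ lam ≤ fr x) := by
    intro x
    constructor
    · intro h
      constructor
      · refine le_of_tendsto (hfl x) ?_
        filter_upwards [self_mem_nhdsWithin] with z hz
        rw [div_le_iff_of_neg (by simpa using sub_neg.mpr (mem_Iio.mp hz))]
        have := h z; nlinarith [h z]
      · refine ge_of_tendsto (hfr x) ?_
        filter_upwards [self_mem_nhdsWithin] with z hz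
        rw [le_div_iff₀ (by simpa using sub_pos.mpr (mem_Ioi.mp hz))]
        nlinarith [h z]
    · rintro ⟨h1, h2⟩ z
      rcases lt_trichotomy z x with hzx | rfl | hzx
      · have := (div_le_iff_of_neg (show z - x < 0 by linarith)).mp
          ((slope_le_fl x z hzx).trans h1)
        nlinarith
      · exact le_refl _
      · have := (le_div_iff₀ (show (0:ℝ) < z - x by linarith)).mp
          (h2.trans (fr_le_slope x z hzx))
        nlinarith
  constructor
  · rintro ⟨xb, hxb⟩
    obtain ⟨h1, h2⟩ := (min_iff xb).mp hxb
    by_cases hA : ∃ x, fl x < lam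
    · by_cases hB : ∃ x, lam < fr x
      · exact Or.inr ⟨hA, hB⟩
      · push_neg at hB
        have heq : fr xb = lam := le_antisymm (hB xb) h2
        exact Or.inl ⟨xb, Or.inr ⟨heq, fun x => (hB x).trans heq.ge⟩⟩
    · push_neg at hA
      have heq : fl xb = lam := le_antisymm h1 (hA xb)
      exact Or.inl ⟨xb, Or.inl ⟨heq, fun x => heq.trans_le (hA x)⟩⟩
  · rintro (⟨xb, ⟨heq, -⟩ | ⟨heq, -⟩⟩ | ⟨⟨a, ha⟩, ⟨b, hb⟩⟩)
    · exact ⟨xb, (min_iff xb).mpr ⟨heq.le, heq ▸ fl_le_fr xb⟩⟩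
    · exact ⟨xb, (min_iff xb).mpr ⟨heq ▸ fl_le_fr xb, heq.ge⟩⟩
    · have hab : a ≤ b := by
        by_contra hcon
        push_neg at hcon
        have h1 : fr b ≤ (f a - f b) / (a - b) := fr_le_slope b a hcon
        have h2 : (f b - f a) / (b - a) ≤ fl a := slope_le_fl a b hcon
        have heq : (f a - f b) / (a - b) = (f b - f a) / (b - a) := by
          rw [show f a - f b = -(f b - f a) by ring, show a - b = -(b - a) by ring,
            neg_div_neg_eq]
        linarith
      have hcont : Continuous fun x => f x - lam * x := by
        have : Continuous f := continuousOn_univ.mp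
          (hf.continuousOn isOpen_univ)
        continuity
      obtain ⟨x0, hx0mem, hx0min⟩ :=
        isCompact_Icc.exists_isMinOn (nonempty_Icc.mpr hab) hcont.continuousOn
      refine ⟨x0, fun z => ?_⟩
      rcases le_or_gt z a with hza | hza
      · rcases eq_or_lt_of_le hza with rfl | hza
        · exact isMinOn_iff.mp hx0min z ⟨le_refl z, hab⟩
        · have hs : (f z - f a) / (z - a) < lam := (slope_le_fl a z hza).trans_lt ha
          rw [div_lt_iff_of_neg (show z - a < 0 by linarith)] at hs
          have h0 : f x0 - lam * x0 ≤ f a - lam * a :=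
            isMinOn_iff.mp hx0min a ⟨le_refl a, hab⟩
          nlinarith
      · rcases le_or_gt z b with hzb | hzb
        · exact isMinOn_iff.mp hx0min z ⟨hza.le, hzb⟩
        · have hs : lam < (f z - f b) / (z - b) := hb.trans_le (fr_le_slope b z hzb)
          rw [lt_div_iff₀ (show (0:ℝ) < z - b by linarith)] at hs
          have h0 : f x0 - lam * x0 ≤ f b - lam * b :=
            isMinOn_iff.mp hx0min b ⟨hab, le_refl b⟩
          nlinarith
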